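/- With R₀ = αβΛ(1-σ)/(μ(μ+α)(μ+γ+Δ)), the eigenvalues of the Jacobian J_DFE at the disease-free equilibrium all have negative real part whenever all parameters μ, α, β, γ, Δ, Λ, ξ are positive, 0 ≤ σ < 1, and R₀ < 1. -/

import Mathlib

/-- Roots of a monic real quadratic with positive coefficients have negative real part. -/
lemma quad_root_neg_re (b c : ℝ) (hb : 0 < b) (hc : 0 < c) (z : ℂ)
    (h : z ^ 2 + (b : ℂ) * z + (c : ℂ) = 0) : z.re < 0 := by
  have hre := congrArg Complex.re h
  have him := congrArg Complex.im h
  simp [pow_two, Complex.add_re, Complex.add_im, Complex.mul_re, Complex.mul_im] at hre him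
  -- him : 2 * z.re * z.im + b * z.im = 0 (in some form)
  rcases eq_or_ne z.im 0 with hy | hy
  · rw [hy] at hre
    by_contra hx
    push_neg at hx
    nlinarith [sq_nonneg z.re]
  · have h2 : z.re * 2 + b = 0 := by
      have : z.im * (z.re * 2 + b) = 0 := by nlinarith
      rcases mul_eq_zero.mp this with h' | h'
      · exact absurd h' hy
      · exact h'
    nlinarith

set_option maxHeartbeats 1600000 in
/-- If all parameters are positive, `0 ≤ σ < 1`, and
`R₀ = αβΛ(1-σ)/(μ(μ+α)(μ+γ+Δ)) < 1`, then every eigenvalue of the Jacobian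
`J_DFE` at the disease-free equilibrium has negative real part. -/
theorem stmt_6 (μ α β γ Δ Λ ξ σ : ℝ)
    (hμ : 0 < μ) (hα : 0 < α) (hβ : 0 < β) (hγ : 0 < γ) (hΔ : 0 < Δ)
    (hΛ : 0 < Λ) (hξ : 0 < ξ) (hσ0 : 0 ≤ σ) (hσ1 : σ < 1)
    (hR0 : α * β * Λ * (1 - σ) / (μ * (μ + α) * (μ + γ + Δ)) < 1) :
    ∀ lam : ℂ,
      Matrix.det
        ((!![-μ, 0, -(β * Λ * (1 - σ) / μ), ξ;
             0, -(μ + α), β * Λ * (1 - σ) / μ, 0;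
             0, α, -(μ + γ + Δ), 0;
             0, 0, γ, -(μ + ξ)] : Matrix (Fin 4) (Fin 4) ℝ).map
            (Complex.ofReal) - lam • (1 : Matrix (Fin 4) (Fin 4) ℂ)) = 0 →
      lam.re < 0 := by
  intro lam h
  have hb : (0:ℝ) < 2 * μ + γ + α + Δ := by linarith
  have hc : (0:ℝ) < (μ + α) * (μ + γ + Δ) - α * (β * Λ * (1 - σ) / μ) := by
    have hd : 0 < μ * (μ + α) * (μ + γ + Δ) := by positivity
    have h1 : α * β * Λ * (1 - σ) < μ * (μ + α) * (μ + γ + Δ) :=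
      (div_lt_one hd).mp hR0
    rw [sub_pos, ← mul_div_assoc, div_lt_iff₀ hμ]
    nlinarith
  have key : ((-(μ:ℂ) - lam) * (-((μ:ℂ) + ξ) - lam)) *
      (lam ^ 2 + ((2 * μ + γ + α + Δ : ℝ) : ℂ) * lam
        + (((μ + α) * (μ + γ + Δ) - α * (β * Λ * (1 - σ) / μ) : ℝ) : ℂ)) = 0 := by
    rw [← h, Matrix.det_succ_row_zero]
    norm_num [Fin.sum_univ_succ, Matrix.det_fin_three, Matrix.submatrix_apply,
      Matrix.sub_apply,
      Matrix.smul_apply, Matrix.one_apply, Matrix.map_apply]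
    push_cast
    ring
  rcases mul_eq_zero.mp key with h12 | h3
  · rcases mul_eq_zero.mp h12 with h1 | h2
    · have : lam = -(μ:ℂ) := by linear_combination -h1
      rw [this]
      simpa using hμ
    · have : lam = -((μ:ℂ) + ξ) := by linear_combination -h2
      rw [this]
      simp [Complex.add_re]
      linarith
  · exact quad_root_neg_re _ _ hb hc lam h3
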